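/- arXiv:2103.01392 — 3 statements merged into one kernel-verified Lean document; each statement's English description precedes it below -/
import Mathlib

section
/- Let r > 0, let D = {z ∈ ℂ : |z| < r} and D* = {z ∈ ℂ : 0 < |z| < r}. Let h : ℂ → ℂ be holomorphic on D, let g : ℂ → ℂ be holomorphic on D* and nowhere vanishing on D*, and let a ∈ ℂ. Suppose that z · g′(z) = (a + z · h′(z)) · g(z) for all z ∈ D*, where g′ and h′ denote complex derivatives. Then a is an integer: there exists n ∈ ℤ with a = n. -/
/-- If `g` is holomorphic and nowhere vanishing on the punctured disk `D* = B(0,r) \ {0}`,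
`h` is holomorphic on the disk `B(0,r)`, and `z·g′(z) = (a + z·h′(z))·g(z)` on `D*`,
then the residue `a` is an integer. -/
theorem stmt_6 (r : ℝ) (hr : 0 < r) (h g : ℂ → ℂ) (a : ℂ)
    (hh : DifferentiableOn ℂ h (Metric.ball (0 : ℂ) r))
    (hg : DifferentiableOn ℂ g (Metric.ball (0 : ℂ) r \ {0}))
    (hg0 : ∀ z ∈ Metric.ball (0 : ℂ) r \ {0}, g z ≠ 0)
    (hode : ∀ z ∈ Metric.ball (0 : ℂ) r \ {0},
      z * deriv g z = (a + z * deriv h z) * g z) :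
    ∃ n : ℤ, a = (n : ℂ) := by
  set S : Set ℂ := Metric.ball (0 : ℂ) r \ {0} with hS
  have hSopen : IsOpen S := Metric.isOpen_ball.sdiff isClosed_singleton
  set c : ℂ := ((r / 2 : ℝ) : ℂ) with hc
  have hc0 : c ≠ 0 := by
    simp [hc]
    positivity
  -- the circle parametrization
  set γ : ℝ → ℂ := fun t => c * Complex.exp (t * Complex.I) with hγ
  have hγmem : ∀ t : ℝ, γ t ∈ S := by
    intro t
    constructor
    · rw [Metric.mem_ball, dist_zero_right]
      simp only [hγ, norm_mul, Complex.norm_exp_ofReal_mul_I, mul_one]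
      simp only [hc, Complex.norm_real, Real.norm_eq_abs, abs_of_pos (show (0:ℝ) < r/2 by positivity)]
      linarith
    · simp only [Set.mem_singleton_iff, hγ]
      exact fun hcon => (mul_eq_zero.mp hcon).elim hc0 (Complex.exp_ne_zero _)
  have hγderiv : ∀ t : ℝ, HasDerivAt γ (Complex.I * γ t) t := by
    intro t
    have h1 : HasDerivAt (fun z : ℂ => c * Complex.exp (z * Complex.I))
        (c * (Complex.exp ((t : ℂ) * Complex.I) * Complex.I)) (t : ℂ) := by
      simpa using (((hasDerivAt_id (t : ℂ)).mul_const Complex.I).cexp).const_mul c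
    have := h1.comp_ofReal
    convert this using 1
    simp [hγ]; ring
  -- the function which will be constant
  set F : ℝ → ℂ := fun t => g (γ t) * Complex.exp (-(a * (t * Complex.I)) - h (γ t))
    with hF
  have hFderiv : ∀ t : ℝ, HasDerivAt F 0 t := by
    intro t
    set z : ℂ := γ t with hz
    have hzS : z ∈ S := hγmem t
    have hgz : HasDerivAt g (deriv g z) z :=
      ((hg.differentiableAt (hSopen.mem_nhds hzS)).hasDerivAt)
    have hhz : HasDerivAt h (deriv h z) z :=
      ((hh.differentiableAt (Metric.isOpen_ball.mem_nhds hzS.1)).hasDerivAt)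
    have hA : HasDerivAt (fun t : ℝ => g (γ t)) (deriv g z * (Complex.I * z)) t :=
      hgz.comp t (hγderiv t)
    have hw : HasDerivAt (fun t : ℝ => -(a * (t * Complex.I)) - h (γ t))
        (-(a * Complex.I) - deriv h z * (Complex.I * z)) t := by
      have h1 : HasDerivAt (fun t : ℝ => a * ((t : ℂ) * Complex.I)) (a * Complex.I) t := by
        have : HasDerivAt (fun w : ℂ => a * (w * Complex.I)) (a * Complex.I) (t : ℂ) := by
          simpa using (((hasDerivAt_id (t : ℂ)).mul_const Complex.I).const_mul a)
        exact this.comp_ofReal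
      exact h1.neg.sub ((hhz.comp t (hγderiv t)))
    have hB : HasDerivAt (fun t : ℝ => Complex.exp (-(a * (t * Complex.I)) - h (γ t)))
        (Complex.exp (-(a * (t * Complex.I)) - h z) *
          (-(a * Complex.I) - deriv h z * (Complex.I * z))) t := hw.cexp
    have := hA.mul hB
    refine this.congr_deriv ?_
    have hodez := hode z hzS
    set E := Complex.exp (-(a * (t * Complex.I)) - h z)
    linear_combination (E * Complex.I) * hodez
  have hFconst : F (2 * Real.pi) = F 0 := by
    have hdiff : Differentiable ℝ F := fun t => (hFderiv t).differentiableAt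
    have : ∀ t, deriv F t = 0 := fun t => (hFderiv t).deriv
    exact is_const_of_deriv_eq_zero hdiff this (2 * Real.pi) 0
  have hγ2π : γ (2 * Real.pi) = c := by
    simp [hγ]
  have hγ0 : γ 0 = c := by simp [hγ]
  rw [hF] at hFconst
  simp only [hγ2π, hγ0] at hFconst
  have hgc : g c ≠ 0 := by
    have := hγmem 0
    rw [hγ0] at this
    exact hg0 c this
  have hexp : Complex.exp (-(a * ((2 * Real.pi : ℝ) * Complex.I)) - h c) =
      Complex.exp (-(a * ((0 : ℝ) * Complex.I)) - h c) := mul_left_cancel₀ hgc hFconst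
  rw [Complex.exp_eq_exp_iff_exists_int] at hexp
  obtain ⟨n, hn⟩ := hexp
  refine ⟨-n, ?_⟩
  have hπ : (2 * Real.pi * Complex.I : ℂ) ≠ 0 := by
    simp [Real.pi_ne_zero, Complex.I_ne_zero]
  have : -(a * (2 * Real.pi * Complex.I)) = (n : ℂ) * (2 * Real.pi * Complex.I) := by
    push_cast at hn ⊢
    linear_combination hn
  have h3 : (-a - (n : ℂ)) * (2 * Real.pi * Complex.I) = 0 := by linear_combination this
  have h4 : -a - (n : ℂ) = 0 := by
    rcases mul_eq_zero.mp h3 with h' | h'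
    · exact h'
    · exact absurd h' hπ
  push_cast
  linear_combination -h4
end

section
/- Let r > 0, let D = {z ∈ ℂ : |z| < r} and D* = {z ∈ ℂ : 0 < |z| < r}. Let h : ℂ → ℂ be holomorphic on D, let g : ℂ → ℂ be holomorphic on D* and nowhere vanishing on D*, and let n ∈ ℤ. Suppose that z · g′(z) = (n + z · h′(z)) · g(z) for all z ∈ D*. Then there exists a nonzero constant c ∈ ℂ such that g(z) = c · zⁿ · exp(h(z)) for all z ∈ D*, where zⁿ denotes the integer power (zpow). -/
open Metric Set Complex

lemma punctured_ball_preconnected (r : ℝ) (hr : 0 < r) :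
    IsPreconnected (Metric.ball (0 : ℂ) r \ {0}) := by
  have hconn : IsConnected ((Ioo (0:ℝ) r) ×ˢ (sphere (0:ℂ) 1)) :=
    (isConnected_Ioo hr).prod
      (isConnected_sphere (by rw [rank_real_complex]; norm_num) 0 zero_le_one)
  have himg : (fun p : ℝ × ℂ => (p.1 : ℂ) * p.2) '' ((Ioo (0:ℝ) r) ×ˢ (sphere (0:ℂ) 1))
      = Metric.ball (0 : ℂ) r \ {0} := by
    ext z
    constructor
    · rintro ⟨⟨t, u⟩, ⟨⟨ht0, htr⟩, hu⟩, rfl⟩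
      simp only [mem_sphere_iff_norm, sub_zero] at hu
      constructor
      · simp only [mem_ball, dist_zero_right, norm_mul, hu, Complex.norm_real,
          Real.norm_eq_abs, abs_of_pos ht0, mul_one]
        exact htr
      · simp only [mem_singleton_iff, mul_eq_zero, not_or]
        constructor
        · exact_mod_cast ht0.ne'
        · intro hu0; rw [hu0] at hu; simp at hu
    · rintro ⟨hzball, hz0⟩
      simp only [mem_singleton_iff] at hz0
      simp only [mem_ball, dist_zero_right] at hzball
      refine ⟨(‖z‖, (‖z‖ : ℂ)⁻¹ * z), ⟨⟨norm_pos_iff.mpr hz0, hzball⟩, ?_⟩, ?_⟩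
      · simp only [mem_sphere_iff_norm, sub_zero, norm_mul, norm_inv, Complex.norm_real,
          Real.norm_eq_abs, abs_norm]
        simp [div_self, norm_ne_zero_iff.mpr hz0]
      · simp only
        rw [← mul_assoc, mul_inv_cancel₀ (by exact_mod_cast norm_ne_zero_iff.mpr hz0), one_mul]
  rw [← himg]
  exact (hconn.image _ (by fun_prop)).isPreconnected


/-- If `g` is holomorphic and nowhere vanishing on the punctured disk `D* = B(0,r) \ {0}`,
`h` is holomorphic on the disk `B(0,r)`, `n` is an integer, and
`z·g′(z) = (n + z·h′(z))·g(z)` on `D*`, then `g(z) = c·zⁿ·exp(h(z))` on `D*` for some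
nonzero constant `c`. -/
theorem stmt_7 (r : ℝ) (hr : 0 < r) (h g : ℂ → ℂ) (n : ℤ)
    (hh : DifferentiableOn ℂ h (Metric.ball (0 : ℂ) r))
    (hg : DifferentiableOn ℂ g (Metric.ball (0 : ℂ) r \ {0}))
    (hg0 : ∀ z ∈ Metric.ball (0 : ℂ) r \ {0}, g z ≠ 0)
    (hode : ∀ z ∈ Metric.ball (0 : ℂ) r \ {0},
      z * deriv g z = ((n : ℂ) + z * deriv h z) * g z) :
    ∃ c : ℂ, c ≠ 0 ∧ ∀ z ∈ Metric.ball (0 : ℂ) r \ {0},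
      g z = c * z ^ n * Complex.exp (h z) := by
  set s := Metric.ball (0 : ℂ) r \ {0} with hs_def
  have hs_open : IsOpen s := Metric.isOpen_ball.sdiff isClosed_singleton
  set F : ℂ → ℂ := fun z => g z * (z ^ (-n) * Complex.exp (-h z)) with hF_def
  -- F has derivative 0 on s
  have hF0 : ∀ z ∈ s, HasDerivAt F 0 z := by
    intro z hz
    have hz0 : z ≠ 0 := by simpa using hz.2
    have hzb : z ∈ Metric.ball (0:ℂ) r := hz.1
    have hgd : HasDerivAt g (deriv g z) z :=
      ((hg z hz).differentiableAt (hs_open.mem_nhds hz)).hasDerivAt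
    have hhd : HasDerivAt h (deriv h z) z :=
      ((hh z hzb).differentiableAt (Metric.isOpen_ball.mem_nhds hzb)).hasDerivAt
    have hzp : HasDerivAt (fun w : ℂ => w ^ (-n)) ((-n : ℤ) * z ^ (-n - 1)) z :=
      hasDerivAt_zpow (-n) z (Or.inl hz0)
    have hexp : HasDerivAt (fun w => Complex.exp (-h w))
        (Complex.exp (-h z) * -deriv h z) z := hhd.neg.cexp
    have := hgd.mul (hzp.mul hexp)
    have key := hode z hz
    refine this.congr_deriv ?_
    symm
    simp only [Pi.mul_apply]
    have hzn : (z:ℂ) ^ n ≠ 0 := zpow_ne_zero _ hz0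
    rw [show (-n - 1 : ℤ) = -(n+1) by ring, zpow_neg, zpow_neg, zpow_add_one₀ hz0]
    have he : Complex.exp (-h z) ≠ 0 := Complex.exp_ne_zero _
    field_simp
    push_cast
    linear_combination (-Complex.exp (-h z)) * key
  have hFdiff : DifferentiableOn ℂ F s := fun z hz =>
    ((hF0 z hz).differentiableAt).differentiableWithinAt
  -- connectedness
  have hpre : IsPreconnected s := punctured_ball_preconnected r hr
  set z₀ : ℂ := ((r/2 : ℝ) : ℂ) with hz₀_def
  have hz₀s : z₀ ∈ s := by
    constructor
    · simp only [mem_ball, dist_zero_right, hz₀_def, Complex.norm_real, Real.norm_eq_abs,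
        abs_of_pos (by linarith : (0:ℝ) < r/2)]
      linarith
    · simp only [mem_singleton_iff, hz₀_def]
      exact_mod_cast (by linarith : (r/2 : ℝ) ≠ 0)
  set c : ℂ := F z₀ with hc_def
  -- F equals c near z₀
  obtain ⟨ε, hε, hball⟩ := Metric.isOpen_iff.mp hs_open z₀ hz₀s
  have hconst : ∀ x ∈ Metric.ball z₀ ε, F x = c := by
    intro x hx
    refine (convex_ball z₀ ε).is_const_of_fderivWithin_eq_zero
      (hFdiff.mono hball) (fun y hy => ?_) hx (mem_ball_self hε)
    have := ((hF0 y (hball hy)).hasFDerivAt.hasFDerivWithinAt).fderivWithin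
      (Metric.isOpen_ball.uniqueDiffWithinAt hy)
    rw [this]
    ext
    simp
  have heq : EqOn F (fun _ => c) s := by
    have hFa : AnalyticOnNhd ℂ F s := hFdiff.analyticOnNhd hs_open
    refine hFa.eqOn_of_preconnected_of_eventuallyEq analyticOnNhd_const hpre hz₀s ?_
    exact Filter.eventuallyEq_of_mem (Metric.ball_mem_nhds z₀ hε) hconst
  refine ⟨c, ?_, ?_⟩
  · simp only [hc_def, hF_def]
    exact mul_ne_zero (hg0 z₀ hz₀s)
      (mul_ne_zero (zpow_ne_zero _ (by simpa using hz₀s.2)) (Complex.exp_ne_zero _))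
  · intro z hz
    have hz0 : z ≠ 0 := by simpa using hz.2
    have := heq hz
    simp only [hF_def] at this
    have hzn : (z:ℂ) ^ n ≠ 0 := zpow_ne_zero _ hz0
    have he : Complex.exp (h z) ≠ 0 := Complex.exp_ne_zero _
    rw [zpow_neg, Complex.exp_neg] at this
    field_simp at this
    linear_combination this
end

section
/- Let r > 0, let D = {z ∈ ℂ : |z| < r} and D* = {z ∈ ℂ : 0 < |z| < r}. Let h : ℂ → ℂ be holomorphic on D, let g : ℂ → ℂ be holomorphic on D* and nowhere vanishing on D*, and let a ∈ ℂ. Suppose that z · g′(z) = (a + z · h′(z)) · g(z) for all z ∈ D*. Then g extends holomorphically across 0 — i.e. there exists G : ℂ → ℂ holomorphic on D with G(z) = g(z) for all z ∈ D* — if and only if a is a nonnegative integer (there exists n ∈ ℕ with a = n). -/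
open Metric Set Filter Complex
open scoped Topology


lemma puncturedBall_preconnected {r : ℝ} (hr : 0 < r) :
    IsPreconnected (Metric.ball (0:ℂ) r \ {0}) := by
  apply isPreconnected_of_forall (((r/2 : ℝ) : ℂ))
  intro y hy
  obtain ⟨hyball, hy0⟩ := hy
  simp only [Set.mem_singleton_iff] at hy0
  have hynorm : 0 < ‖y‖ := norm_pos_iff.mpr hy0
  have hylt : ‖y‖ < r := by simpa [Metric.mem_ball, dist_eq_norm] using hyball
  set S : Set ℂ := Metric.sphere (0:ℂ) (r/2) with hS
  set L : Set ℂ := (fun t : ℝ => (t:ℂ) * y) '' Set.Ioo 0 (r / ‖y‖) with hL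
  have hSsub : S ⊆ Metric.ball (0:ℂ) r \ {0} := by
    intro z hz
    rw [hS, Metric.mem_sphere, dist_zero_right] at hz
    constructor
    · rw [Metric.mem_ball, dist_zero_right, hz]; linarith
    · simp only [Set.mem_singleton_iff]
      intro h; rw [h] at hz; simp at hz; linarith
  have hLsub : L ⊆ Metric.ball (0:ℂ) r \ {0} := by
    rintro z ⟨t, ⟨ht0, htr⟩, rfl⟩
    have hnz : ‖(t:ℂ) * y‖ = t * ‖y‖ := by
      rw [norm_mul, Complex.norm_real, Real.norm_eq_abs, abs_of_pos ht0]
    constructor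
    · rw [Metric.mem_ball, dist_zero_right, hnz]
      calc t * ‖y‖ < (r / ‖y‖) * ‖y‖ := mul_lt_mul_of_pos_right htr hynorm
        _ = r := div_mul_cancel₀ r (ne_of_gt hynorm)
    · simp only [Set.mem_singleton_iff]
      intro h
      rw [h] at hnz
      simp at hnz
      rcases hnz with h1 | h1
      · linarith
      · exact hy0 h1
  have hScon : IsPreconnected S := by
    apply isPreconnected_sphere (E := ℂ)
    rw [rank_real_complex]; norm_num
  have hLcon : IsPreconnected L := by
    apply IsPreconnected.image isPreconnected_Ioo
    exact (Continuous.mul Complex.continuous_ofReal continuous_const).continuousOn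
  have hp : (((r/2 / ‖y‖ : ℝ)) : ℂ) * y ∈ S ∩ L := by
    constructor
    · rw [hS, Metric.mem_sphere, dist_zero_right, norm_mul, Complex.norm_real,
        Real.norm_eq_abs, abs_of_pos (by positivity), div_mul_cancel₀ _ (ne_of_gt hynorm)]
    · refine ⟨r/2/‖y‖, ⟨by positivity, ?_⟩, rfl⟩
      apply div_lt_div_of_pos_right ?_ hynorm
      linarith
  refine ⟨S ∪ L, Set.union_subset hSsub hLsub, Or.inl ?_, Or.inr ?_, ?_⟩
  · rw [hS, Metric.mem_sphere, dist_zero_right, Complex.norm_real, Real.norm_eq_abs,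
      abs_of_pos (by linarith)]
  · exact ⟨1, ⟨one_pos, (one_lt_div hynorm).mpr hylt⟩, by simp⟩
  · exact IsPreconnected.union _ hp.1 hp.2 hScon hLcon


lemma stmt8_mpr (r : ℝ) (hr : 0 < r) (h g : ℂ → ℂ) (n : ℕ)
    (hh : DifferentiableOn ℂ h (Metric.ball (0 : ℂ) r))
    (hg : DifferentiableOn ℂ g (Metric.ball (0 : ℂ) r \ {0}))
    (hode : ∀ z ∈ Metric.ball (0 : ℂ) r \ {0},
      z * deriv g z = ((n:ℂ) + z * deriv h z) * g z)
    (hpc : IsPreconnected (Metric.ball (0:ℂ) r \ {0})) :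
    (∃ G : ℂ → ℂ, DifferentiableOn ℂ G (Metric.ball (0 : ℂ) r) ∧
      ∀ z ∈ Metric.ball (0 : ℂ) r \ {0}, G z = g z) := by
  set s : Set ℂ := Metric.ball (0:ℂ) r \ {0} with hs
  have hs_open : IsOpen s := isOpen_ball.sdiff isClosed_singleton
  set u : ℂ → ℂ := fun z => g z * Complex.exp (-h z) / z ^ n with hu
  have hu_deriv : ∀ z ∈ s, HasDerivAt u 0 z := by
    intro z hz
    have hz0 : z ≠ 0 := by
      intro hzz; exact hz.2 (by simp [hzz])
    have hgz : HasDerivAt g (deriv g z) z :=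
      (hg.differentiableAt (hs_open.mem_nhds hz)).hasDerivAt
    have hhz : HasDerivAt h (deriv h z) z :=
      (hh.differentiableAt (isOpen_ball.mem_nhds hz.1)).hasDerivAt
    have he : HasDerivAt (fun w => Complex.exp (-h w))
        (Complex.exp (-h z) * -deriv h z) z := hhz.neg.cexp
    have hnum := hgz.mul he
    have hden : HasDerivAt (fun w : ℂ => w ^ n) ((n:ℂ) * z ^ (n-1)) z := hasDerivAt_pow n z
    have hdiv := hnum.div hden (pow_ne_zero n hz0)
    refine (hdiv.congr_deriv ?_ : HasDerivAt u _ z)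
    rw [div_eq_zero_iff]
    left
    rcases n with _ | m
    · have h1 : deriv g z = deriv h z * g z := by
        apply mul_left_cancel₀ hz0
        have := hode z hz
        push_cast at this
        linear_combination this
      simp only [pow_zero, mul_one, Nat.cast_zero, zero_mul, mul_zero, sub_zero]
      linear_combination Complex.exp (-h z) * h1
    · have hode' := hode z hz
      have hps : z ^ (m + 1) = z ^ m * z := pow_succ z m
      have hps2 : z ^ (m + 1 - 1) = z ^ m := by norm_num
      rw [hps, hps2]
      push_cast [Pi.mul_apply] at hode' ⊢
      linear_combination (Complex.exp (-h z) * z ^ m) * hode'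
  have hz₀mem : (((r/2 : ℝ)) : ℂ) ∈ s := by
    constructor
    · rw [Metric.mem_ball, dist_zero_right, Complex.norm_real, Real.norm_eq_abs,
        abs_of_pos (by linarith)]
      linarith
    · simp only [Set.mem_singleton_iff, Complex.ofReal_eq_zero]
      intro hq
      linarith
  obtain ⟨ε, hε, hball⟩ := Metric.isOpen_iff.mp hs_open _ hz₀mem
  have hconst : ∀ z ∈ Metric.ball (((r/2:ℝ)):ℂ) ε, u z = u ((r/2:ℝ):ℂ) := by
    intro z hzmem
    apply Convex.is_const_of_fderivWithin_eq_zero (convex_ball _ _)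
      ((fun w hw => ((hu_deriv w (hball hw)).differentiableAt.differentiableWithinAt)))
      ?_ hzmem (Metric.mem_ball_self hε)
    intro w hw
    rw [fderivWithin_of_mem_nhds (isOpen_ball.mem_nhds hw)]
    have := (hu_deriv w (hball hw)).hasFDerivAt
    rw [this.fderiv]
    ext
    simp
  have hudiff : DifferentiableOn ℂ u s :=
    fun z hz => (hu_deriv z hz).differentiableAt.differentiableWithinAt
  have huan : AnalyticOnNhd ℂ u s := hudiff.analyticOnNhd hs_open
  have hueq : EqOn u (fun _ => u ((r/2:ℝ):ℂ)) s := by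
    apply huan.eqOn_of_preconnected_of_eventuallyEq analyticOnNhd_const hpc hz₀mem
    filter_upwards [Metric.ball_mem_nhds _ hε] with z hz using hconst z hz
  set c : ℂ := u ((r/2:ℝ):ℂ) with hc
  refine ⟨fun z => c * (z ^ n * Complex.exp (h z)), ?_, ?_⟩
  · apply DifferentiableOn.const_mul
    exact (differentiableOn_pow n).mul (hh.cexp)
  · intro z hz
    have hz0 : z ≠ 0 := fun hzz => hz.2 (by simp [hzz])
    have hcz : c = g z * Complex.exp (-h z) / z ^ n := (hueq hz).symm
    rw [hcz]
    field_simp [pow_ne_zero n hz0]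
    have hexp : Complex.exp (-h z) * Complex.exp (h z) = 1 := by
      rw [← Complex.exp_add]; simp
    linear_combination (g z) * hexp


lemma stmt8_mp (r : ℝ) (hr : 0 < r) (h g : ℂ → ℂ) (a : ℂ)
    (hh : DifferentiableOn ℂ h (Metric.ball (0 : ℂ) r))
    (hg : DifferentiableOn ℂ g (Metric.ball (0 : ℂ) r \ {0}))
    (hg0 : ∀ z ∈ Metric.ball (0 : ℂ) r \ {0}, g z ≠ 0)
    (hode : ∀ z ∈ Metric.ball (0 : ℂ) r \ {0},
      z * deriv g z = (a + z * deriv h z) * g z)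
    (G : ℂ → ℂ) (hG : DifferentiableOn ℂ G (Metric.ball (0 : ℂ) r))
    (hGg : ∀ z ∈ Metric.ball (0 : ℂ) r \ {0}, G z = g z) :
    ∃ n : ℕ, a = (n : ℂ) := by
  set s : Set ℂ := Metric.ball (0:ℂ) r \ {0} with hsdef
  have hs_open : IsOpen s := isOpen_ball.sdiff isClosed_singleton
  have hs_mem : s ∈ 𝓝[≠] (0:ℂ) :=
    diff_mem_nhdsWithin_compl (isOpen_ball.mem_nhds (Metric.mem_ball_self hr)) {0}
  have hGa : AnalyticAt ℂ G 0 := hG.analyticAt (isOpen_ball.mem_nhds (Metric.mem_ball_self hr))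
  -- order is finite
  have hord : analyticOrderAt G 0 ≠ ⊤ := by
    rw [Ne, analyticOrderAt_eq_top]
    intro hev
    have hev' : ∀ᶠ z in 𝓝[≠] (0:ℂ), G z = 0 := hev.filter_mono nhdsWithin_le_nhds
    obtain ⟨z, hz0, hzs⟩ := (hev'.and (eventually_mem_nhdsWithin.and
      (Filter.eventually_of_mem hs_mem fun w hw => hw))).exists
    exact hg0 z hzs.2 (by rw [← hGg z hzs.2]; exact hz0)
  obtain ⟨n, hn⟩ := WithTop.ne_top_iff_exists.mp hord
  obtain ⟨F, hFa, hF0, hFeq⟩ := (hGa.analyticOrderAt_eq_natCast (n := n)).mp hn.symm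
  have hFeq' : ∀ᶠ z in 𝓝 (0:ℂ), G z = z ^ n * F z := by
    filter_upwards [hFeq] with z hz using by simpa using hz
  -- derivative of G near 0 equals derivative of z^n * F
  have hEE : G =ᶠ[𝓝 (0:ℂ)] (fun w => w ^ n * F w) := hFeq'
  have hderiv_eq : deriv G =ᶠ[𝓝 (0:ℂ)] deriv (fun w => w ^ n * F w) := hEE.deriv
  have hFan : ∀ᶠ z in 𝓝 (0:ℂ), AnalyticAt ℂ F z := hFa.eventually_analyticAt
  have hderiv_val : ∀ᶠ z in 𝓝 (0:ℂ),
      deriv (fun w => w ^ n * F w) z = (n:ℂ) * z ^ (n-1) * F z + z ^ n * deriv F z := by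
    filter_upwards [hFan] with z hz
    exact ((hasDerivAt_pow n z).mul hz.differentiableAt.hasDerivAt).deriv
  -- ODE transferred to G on s
  have hodeG : ∀ z ∈ s, z * deriv G z = (a + z * deriv h z) * G z := by
    intro z hz
    have h1 : G =ᶠ[𝓝 z] g := by
      filter_upwards [hs_open.mem_nhds hz] with w hw using hGg w hw
    rw [h1.deriv_eq, hGg z hz]
    exact hode z hz
  -- key cancellation on the punctured neighborhood
  have key : ∀ᶠ z in 𝓝[≠] (0:ℂ),
      (n:ℂ) * F z + z * deriv F z = (a + z * deriv h z) * F z := by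
    filter_upwards [hs_mem, (hFeq'.and (hderiv_eq.and hderiv_val)).filter_mono
      nhdsWithin_le_nhds, eventually_mem_nhdsWithin] with z hzs hz hz0
    obtain ⟨hG1, hG2, hG3⟩ := hz
    have hz0' : z ≠ 0 := hz0
    have hzn : z ^ n ≠ 0 := pow_ne_zero n hz0'
    have hODE := hodeG z hzs
    rw [hG1, hG2, hG3] at hODE
    apply mul_left_cancel₀ hzn
    have hzz : z * ((n:ℂ) * z ^ (n-1) * F z) = z ^ n * ((n:ℂ) * F z) := by
      rcases n with _ | m
      · simp
      · have : z ^ (m + 1 - 1) = z ^ m := by norm_num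
        rw [this, pow_succ]; ring
    calc z ^ n * ((n:ℂ) * F z + z * deriv F z)
        = z * ((n:ℂ) * z ^ (n-1) * F z) + z * (z ^ n * deriv F z) := by rw [hzz]; ring
      _ = z * ((n:ℂ) * z ^ (n-1) * F z + z ^ n * deriv F z) := by ring
      _ = (a + z * deriv h z) * (z ^ n * F z) := hODE
      _ = z ^ n * ((a + z * deriv h z) * F z) := by ring
  -- continuity and limits
  have hFc : ContinuousAt F 0 := hFa.continuousAt
  have hF'c : ContinuousAt (deriv F) 0 := by
    obtain ⟨t, ht, hta⟩ := hFan.exists_mem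
    have : AnalyticOnNhd ℂ F (interior t) := fun z hz => hta z (interior_subset hz)
    exact ((this.deriv) 0 (by rw [mem_interior_iff_mem_nhds]; exact ht)).continuousAt
  have hh'c : ContinuousAt (deriv h) 0 :=
    (((hh.analyticOnNhd isOpen_ball).deriv) 0 (Metric.mem_ball_self hr)).continuousAt
  have t1 : Tendsto (fun z => (n:ℂ) * F z + z * deriv F z) (𝓝[≠] (0:ℂ))
      (𝓝 ((n:ℂ) * F 0 + 0 * deriv F 0)) :=
    ((continuousAt_const.mul hFc).add (continuousAt_id.mul hF'c)).continuousWithinAt.tendsto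
  have t2 : Tendsto (fun z => (a + z * deriv h z) * F z) (𝓝[≠] (0:ℂ))
      (𝓝 ((a + 0 * deriv h 0) * F 0)) :=
    ((continuousAt_const.add (continuousAt_id.mul hh'c)).mul hFc).continuousWithinAt.tendsto
  have hlim := tendsto_nhds_unique (t1.congr' key) t2
  have : (n:ℂ) * F 0 = a * F 0 := by simpa using hlim
  exact ⟨n, (mul_right_cancel₀ hF0 this).symm⟩


/-- With `g` holomorphic and nowhere vanishing on the punctured disk `D* = B(0,r) \ {0}`,
`h` holomorphic on `B(0,r)`, and `z·g′(z) = (a + z·h′(z))·g(z)` on `D*`: the function `g`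
extends holomorphically across `0` if and only if `a` is a nonnegative integer. -/
theorem stmt_8 (r : ℝ) (hr : 0 < r) (h g : ℂ → ℂ) (a : ℂ)
    (hh : DifferentiableOn ℂ h (Metric.ball (0 : ℂ) r))
    (hg : DifferentiableOn ℂ g (Metric.ball (0 : ℂ) r \ {0}))
    (hg0 : ∀ z ∈ Metric.ball (0 : ℂ) r \ {0}, g z ≠ 0)
    (hode : ∀ z ∈ Metric.ball (0 : ℂ) r \ {0},
      z * deriv g z = (a + z * deriv h z) * g z) :
    (∃ G : ℂ → ℂ, DifferentiableOn ℂ G (Metric.ball (0 : ℂ) r) ∧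
      ∀ z ∈ Metric.ball (0 : ℂ) r \ {0}, G z = g z) ↔ ∃ n : ℕ, a = (n : ℂ) := by
  constructor
  · rintro ⟨G, hG, hGg⟩
    exact stmt8_mp r hr h g a hh hg hg0 hode G hG hGg
  · rintro ⟨n, rfl⟩
    exact stmt8_mpr r hr h g n hh hg hode (puncturedBall_preconnected hr)
end
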